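/- Let X ≥ 1 and s = σ+it with σ > θ and s ≠ 1. Then | ζ_X(s) − κ·(1 − X^{1−s})/(s−1) | ≤ A·( |s|·(1 − X^{θ−σ})/(σ−θ) + X^{θ−σ} ), and consequently | ζ_X(s) − κ·(1 − X^{1−s})/(s−1) | ≤ A·min( |s|/(σ−θ), |s|·log X + X^{θ−σ} ). -/

import Mathlib

open MeasureTheory Complex Filter

/-- The norm of an element `g` of the free arithmetical semigroup `ι →₀ ℕ`,
given the norms `q i > 1` of the generators (Beurling primes). -/
noncomputable def gnorm {ι : Type*} (q : ι → ℝ) (g : ι →₀ ℕ) : ℝ :=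
  g.prod fun i k => q i ^ k

/-- The counting function `N(x) = #{g : |g| ≤ x}`. -/
noncomputable def Ncount {ι : Type*} (q : ι → ℝ) (x : ℝ) : ℕ :=
  Nat.card {g : ι →₀ ℕ // gnorm q g ≤ x}

/-- The partial zeta function `ζ_X(s) = Σ_{|g| ≤ X} |g|^{-s}` (a finite sum
under the discreteness assumption). -/
noncomputable def zetaX {ι : Type*} (q : ι → ℝ) (X : ℝ) (s : ℂ) : ℂ :=
  ∑ᶠ g ∈ {g : ι →₀ ℕ | gnorm q g ≤ X}, (gnorm q g : ℂ) ^ (-s)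

/-- The real-valued partial zeta function at a real argument `σ`:
`ζ_X(σ) = Σ_{|g| ≤ X} |g|^{-σ}`. -/
noncomputable def zetaXR {ι : Type*} (q : ι → ℝ) (X : ℝ) (σ : ℝ) : ℝ :=
  ∑ᶠ g ∈ {g : ι →₀ ℕ | gnorm q g ≤ X}, (gnorm q g) ^ (-σ)

lemma one_le_gnorm {ι : Type*} {q : ι → ℝ} (hq : ∀ i, 1 < q i) (g : ι →₀ ℕ) :
    1 ≤ gnorm q g := by
  rw [gnorm, Finsupp.prod]
  calc (1:ℝ) = ∏ _i ∈ g.support, 1 := by simp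
  _ ≤ ∏ i ∈ g.support, q i ^ g i :=
    Finset.prod_le_prod (by intros; norm_num) fun i _ => one_le_pow₀ (hq i).le

lemma ncount_card {ι : Type*} {q : ι → ℝ}
    (hdisc : ∀ x : ℝ, {g : ι →₀ ℕ | gnorm q g ≤ x}.Finite) (x : ℝ) :
    Ncount q x = ((hdisc x).toFinset).card := by
  rw [Ncount, show {g : ι →₀ ℕ // gnorm q g ≤ x} = ↥{g : ι →₀ ℕ | gnorm q g ≤ x} from rfl,
    Nat.card_coe_set_eq, Set.ncard_eq_toFinset_card _ (hdisc x)]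

theorem beurling_partial_zeta_remainder_bound
    {ι : Type*} [Countable ι] (q : ι → ℝ) (θ A κ : ℝ)
    (hq : ∀ i, 1 < q i)
    (hdisc : ∀ x : ℝ, {g : ι →₀ ℕ | gnorm q g ≤ x}.Finite)
    (hθ0 : 0 < θ) (hθ1 : θ < 1) (hA : 0 < A) (hκ : 0 < κ)
    (hAx : ∀ x : ℝ, 1 ≤ x → |(Ncount q x : ℝ) - κ * (x - 1)| ≤ A * x ^ θ)
    (X : ℝ) (hX : 1 ≤ X) (s : ℂ) (hs : θ < s.re) (hs1 : s ≠ 1) :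
    ‖zetaX q X s - (κ : ℂ) * (1 - (X : ℂ) ^ ((1 : ℂ) - s)) / (s - 1)‖ ≤
      A * (‖s‖ * (1 - X ^ (θ - s.re)) / (s.re - θ) + X ^ (θ - s.re)) ∧
    ‖zetaX q X s - (κ : ℂ) * (1 - (X : ℂ) ^ ((1 : ℂ) - s)) / (s - 1)‖ ≤
      A * min (‖s‖ / (s.re - θ))
        (‖s‖ * Real.log X + X ^ (θ - s.re)) := by
  classical
  have hσθ : 0 < s.re - θ := sub_pos.mpr hs
  have hσ0 : 0 < s.re := hθ0.trans hs
  have hs0 : s ≠ 0 := fun h => by simp [h] at hσ0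
  have hX0 : (0:ℝ) < X := lt_of_lt_of_le one_pos hX
  set T : Finset (ι →₀ ℕ) := (hdisc X).toFinset with hT
  have hTmem : ∀ g, g ∈ T ↔ gnorm q g ≤ X := fun g => (hdisc X).mem_toFinset
  set h : ℝ → ℂ := fun x => (x:ℂ)^(-s-1) with hh
  have hint : ∀ a b : ℝ, 0 < a → 0 < b → IntervalIntegrable h volume a b := fun a b ha hb =>
    intervalIntegral.intervalIntegrable_cpow (Or.inr (Set.notMem_uIcc_of_lt ha hb))
  have hcont : ContinuousOn h (Set.uIcc 1 X) := by
    intro x hx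
    rw [Set.uIcc_of_le hX] at hx
    exact (continuousAt_ofReal_cpow_const x _ (Or.inr (by linarith [hx.1]))).continuousWithinAt
  have h0 : (0:ℝ) ∉ Set.uIcc 1 X := Set.notMem_uIcc_of_lt one_pos hX0
  -- per-element Abel identity
  have key : ∀ a : ℝ, 1 ≤ a → a ≤ X →
      (a:ℂ)^(-s) = (X:ℂ)^(-s) + s * ∫ x in a..X, h x := by
    intro a ha haX
    have h0' : (0:ℝ) ∉ Set.uIcc a X := Set.notMem_uIcc_of_lt (by linarith) hX0
    have hne : (-s-1 : ℂ) ≠ -1 := fun H => hs0 (by linear_combination -H)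
    have := integral_cpow (a := a) (b := X) (r := -s-1) (Or.inr ⟨hne, h0'⟩)
    rw [show (-s-1+1 : ℂ) = -s by ring] at this
    rw [hh]
    rw [this, div_neg, mul_neg, ← mul_div_assoc, mul_div_cancel_left₀ _ hs0]
    ring
  have habX : ∀ a : ℝ, 1 ≤ a → a ≤ X →
      ∫ x in a..X, h x =
        (∫ x in (1)..X, h x) - ∫ x in (1)..X, Set.indicator {y : ℝ | y ≤ a} h x := by
    intro a ha haX
    rw [intervalIntegral.integral_indicator ⟨ha, haX⟩]
    exact (intervalIntegral.integral_interval_sub_left (hint 1 X one_pos hX0)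
      (hint 1 a one_pos (by linarith))).symm
  have hind : ∀ a : ℝ, IntervalIntegrable (Set.indicator {y : ℝ | y ≤ a} h) volume 1 X := by
    intro a
    have H := hint 1 X one_pos hX0
    exact ⟨H.1.indicator measurableSet_Iic, H.2.indicator measurableSet_Iic⟩
  have hNmono : Monotone (fun x : ℝ => ((Ncount q x : ℝ))) := by
    intro x y hxy
    simp only [Nat.cast_le]
    rw [ncount_card hdisc x, ncount_card hdisc y]
    apply Finset.card_le_card
    intro g hg
    simp only [Set.Finite.mem_toFinset, Set.mem_setOf_eq] at *
    exact hg.trans hxy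
  have hNint : IntervalIntegrable (fun x : ℝ => ((Ncount q x : ℝ) : ℂ)) volume 1 X := by
    have H := hNmono.intervalIntegrable (a := 1) (b := X) (μ := volume)
    exact ⟨H.1.ofReal, H.2.ofReal⟩
  have hNh : IntervalIntegrable (fun x => ((Ncount q x : ℝ) : ℂ) * h x) volume 1 X :=
    hNint.mul_continuousOn hcont
  -- Step A
  have stepA : zetaX q X s = (Ncount q X : ℂ) * (X:ℂ)^(-s)
      + s * ∫ x in (1)..X, ((Ncount q x : ℝ) : ℂ) * h x := by
    have hzeta : zetaX q X s = ∑ g ∈ T, (gnorm q g : ℂ) ^ (-s) := by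
      rw [zetaX, ← (hdisc X).coe_toFinset, finsum_mem_coe_finset]
    have hterm : ∀ g ∈ T, (gnorm q g : ℂ) ^ (-s)
        = (X:ℂ)^(-s) + s * ∫ x in (1)..X,
            (h x - Set.indicator {y : ℝ | y ≤ gnorm q g} h x) := by
      intro g hg
      rw [intervalIntegral.integral_sub (hint 1 X one_pos hX0) (hind _),
        ← habX _ (one_le_gnorm hq g) ((hTmem g).mp hg)]
      exact key _ (one_le_gnorm hq g) ((hTmem g).mp hg)
    rw [hzeta, Finset.sum_congr rfl hterm, Finset.sum_add_distrib, Finset.sum_const,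
      ← Finset.mul_sum,
      ← intervalIntegral.integral_finset_sum
        (fun (g : ι →₀ ℕ) _ => (hint 1 X one_pos hX0).sub (hind (gnorm q g)))]
    congr 1
    · rw [nsmul_eq_mul, ncount_card hdisc X]
    congr 1
    apply intervalIntegral.integral_congr_ae
    have hae : ∀ᵐ x : ℝ, x ∉ (↑(T.image (gnorm q)) : Set ℝ) :=
      (Set.Countable.ae_notMem (T.image (gnorm q)).countable_toSet volume)
    filter_upwards [hae] with x hx hx'
    rw [Set.uIoc_of_le hX] at hx'
    have hterm2 : ∀ g ∈ T, h x - Set.indicator {y : ℝ | y ≤ gnorm q g} h x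
        = if gnorm q g < x then h x else 0 := by
      intro g _
      by_cases hcase : x ≤ gnorm q g
      · rw [Set.indicator_of_mem (show x ∈ {y : ℝ | y ≤ gnorm q g} from hcase) h, if_neg (not_lt.mpr hcase)]; ring
      · rw [Set.indicator_of_notMem (show x ∉ {y : ℝ | y ≤ gnorm q g} from hcase) h, if_pos (lt_of_not_ge hcase)]; ring
    rw [Finset.sum_congr rfl hterm2, ← Finset.sum_filter, Finset.sum_const, nsmul_eq_mul]
    have hfil : (hdisc x).toFinset = T.filter fun g => gnorm q g < x := by
      ext g
      simp only [Set.Finite.mem_toFinset, Set.mem_setOf_eq, Finset.mem_filter, hTmem]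
      constructor
      · intro hg
        have hgT : g ∈ T := (hTmem g).mpr (hg.trans hx'.2)
        refine ⟨(hTmem g).mp hgT, lt_of_le_of_ne hg fun hEq => hx ?_⟩
        rw [Finset.coe_image, Set.mem_image]
        exact ⟨g, by simpa using hgT, hEq⟩
      · exact fun hg => hg.2.le
    rw [ncount_card hdisc x, hfil]
    norm_cast
  -- explicit integrals
  have hI2 : ∫ x in (1)..X, h x = ((X:ℂ)^(-s) - 1)/(-s) := by
    have hne : (-s-1 : ℂ) ≠ -1 := fun H => hs0 (by linear_combination -H)
    have := integral_cpow (a := 1) (b := X) (r := -s-1) (Or.inr ⟨hne, h0⟩)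
    rw [show (-s-1+1 : ℂ) = -s by ring, Complex.ofReal_one, Complex.one_cpow] at this
    exact this
  have hI1 : ∫ x in (1)..X, (x:ℂ)^(-s) = ((X:ℂ)^(1-s) - 1)/(1-s) := by
    have hne : (-s : ℂ) ≠ -1 := fun H => hs1 (by linear_combination -H)
    have := integral_cpow (a := 1) (b := X) (r := -s) (Or.inr ⟨hne, h0⟩)
    rw [show (-s+1 : ℂ) = 1-s by ring, Complex.ofReal_one, Complex.one_cpow] at this
    exact this
  have hKint : IntervalIntegrable (fun x : ℝ => ((κ*(x-1):ℝ):ℂ) * h x) volume 1 X :=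
    (Continuous.intervalIntegrable
      (Complex.continuous_ofReal.comp (continuous_const.mul (continuous_id.sub continuous_const))) 1 X).mul_continuousOn hcont
  have hI3 : ∫ x in (1)..X, ((κ*(x-1) : ℝ) : ℂ) * h x
      = (κ:ℂ) * (((X:ℂ)^(1-s) - 1)/(1-s)) - (κ:ℂ) * (((X:ℂ)^(-s) - 1)/(-s)) := by
    rw [← hI1, ← hI2, ← intervalIntegral.integral_const_mul,
      ← intervalIntegral.integral_const_mul,
      ← intervalIntegral.integral_sub
        ((intervalIntegral.intervalIntegrable_cpow (Or.inr h0)).const_mul _)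
        ((hint 1 X one_pos hX0).const_mul _)]
    apply intervalIntegral.integral_congr
    intro x hx
    rw [Set.uIcc_of_le hX] at hx
    have hx0 : (x:ℂ) ≠ 0 := Complex.ofReal_ne_zero.mpr (by linarith [hx.1])
    have hxp : (x:ℂ)^(-s-1) * x = (x:ℂ)^(-s) := by
      have H := Complex.cpow_add (-s-1) 1 hx0
      rw [Complex.cpow_one] at H
      rw [← H]
      congr 1
      ring
    simp only [hh]
    push_cast
    rw [← hxp]
    ring
  have stepB : (κ:ℂ) * (1 - (X:ℂ)^((1:ℂ)-s)) / (s-1)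
      = (κ:ℂ) * ((X:ℝ) - 1) * (X:ℂ)^(-s) + s * ∫ x in (1)..X, ((κ*(x-1):ℝ):ℂ) * h x := by
    rw [hI3]
    have hXpow : (X:ℂ)^((1:ℂ)-s) = (X:ℂ) * (X:ℂ)^(-s) := by
      rw [show (1:ℂ)-s = 1 + -s by ring,
        Complex.cpow_add _ _ (Complex.ofReal_ne_zero.mpr hX0.ne'), Complex.cpow_one]
    rw [hXpow]
    have hs1' : s - 1 ≠ 0 := sub_ne_zero.mpr hs1
    have h1s : (1:ℂ) - s ≠ 0 := fun H => hs1 (by linear_combination -H)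
    push_cast
    rw [div_neg]
    field_simp
    ring
  -- the difference identity
  have hdiffeq : zetaX q X s - (κ:ℂ) * (1 - (X:ℂ)^((1:ℂ)-s)) / (s-1)
      = (((Ncount q X : ℝ) - κ*(X-1) : ℝ) : ℂ) * (X:ℂ)^(-s)
        + s * ∫ x in (1)..X, ((((Ncount q x : ℝ) - κ*(x-1)) : ℝ) : ℂ) * h x := by
    have hsplit : (fun x : ℝ => ((((Ncount q x : ℝ) - κ*(x-1)) : ℝ) : ℂ) * h x)
        = fun x : ℝ => ((Ncount q x : ℝ) : ℂ) * h x - ((κ*(x-1) : ℝ) : ℂ) * h x := by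
      funext x
      push_cast
      ring
    rw [hsplit, intervalIntegral.integral_sub hNh hKint, stepA, stepB]
    push_cast
    ring
  -- now the estimates
  have hB1 : ‖zetaX q X s - (κ : ℂ) * (1 - (X : ℂ) ^ ((1 : ℂ) - s)) / (s - 1)‖ ≤
      A * (‖s‖ * (1 - X ^ (θ - s.re)) / (s.re - θ) + X ^ (θ - s.re)) := by
    rw [hdiffeq]
    set u : ℝ := X ^ (θ - s.re) with hu
    have hXpows : ‖(X:ℂ)^(-s)‖ = X ^ (-s.re) := by
      rw [Complex.norm_cpow_eq_rpow_re_of_pos hX0, Complex.neg_re]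
    have hfirst : ‖(((Ncount q X : ℝ) - κ*(X-1) : ℝ) : ℂ) * (X:ℂ)^(-s)‖ ≤ A * u := by
      rw [norm_mul, Complex.norm_real, Real.norm_eq_abs, hXpows]
      calc |(Ncount q X : ℝ) - κ*(X-1)| * X ^ (-s.re) ≤ (A * X ^ θ) * X ^ (-s.re) :=
        mul_le_mul_of_nonneg_right (hAx X hX) (Real.rpow_nonneg hX0.le _)
      _ = A * u := by
        rw [hu, mul_assoc, ← Real.rpow_add hX0]
        ring_nf
    have hGint : IntervalIntegrable (fun x : ℝ => A * x ^ (θ - s.re - 1)) volume 1 X :=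
      (intervalIntegral.intervalIntegrable_rpow (Or.inr h0)).const_mul A
    have hIbound : ‖∫ x in (1)..X, ((((Ncount q x : ℝ) - κ*(x-1)) : ℝ) : ℂ) * h x‖
        ≤ A * ((1 - u)/(s.re - θ)) := by
      have hGval : ∫ x in (1)..X, A * x ^ (θ - s.re - 1) = A * ((1 - u)/(s.re - θ)) := by
        have hne : θ - s.re - 1 ≠ -1 := fun H => hσθ.ne' (by linarith)
        rw [intervalIntegral.integral_const_mul, integral_rpow (Or.inr ⟨hne, h0⟩),
          show θ - s.re - 1 + 1 = θ - s.re by ring, Real.one_rpow]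
        rw [hu, show θ - s.re = -(s.re - θ) by ring, Real.rpow_neg hX0.le, div_neg, ← neg_div,
          neg_sub]
      have hb := intervalIntegral.norm_integral_le_of_norm_le (μ := volume) (a := 1) (b := X)
        (f := fun x : ℝ => ((((Ncount q x : ℝ) - κ*(x-1)) : ℝ) : ℂ) * h x)
        (g := fun x : ℝ => A * x ^ (θ - s.re - 1)) hX ?_ hGint
      · rw [hGval] at hb
        have habs : |A * ((1 - u)/(s.re - θ))| = A * ((1 - u)/(s.re - θ)) := by
          have hu1 : u ≤ 1 := Real.rpow_le_one_of_one_le_of_nonpos hX (by linarith)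
          exact abs_of_nonneg (mul_nonneg hA.le (div_nonneg (by linarith) hσθ.le))
        exact hb
      · filter_upwards with t ht
        have ht0 : (0:ℝ) < t := lt_trans one_pos ht.1
        rw [norm_mul, Complex.norm_real, hh]
        simp only
        rw [Complex.norm_cpow_eq_rpow_re_of_pos ht0]
        have : ((-s - 1 : ℂ)).re = -s.re - 1 := by simp
        rw [this]
        calc ‖(Ncount q t : ℝ) - κ*(t-1)‖ * t ^ (-s.re - 1)
            ≤ (A * t ^ θ) * t ^ (-s.re - 1) :=
          mul_le_mul_of_nonneg_right (hAx t ht.1.le) (Real.rpow_nonneg ht0.le _)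
          _ = A * t ^ (θ - s.re - 1) := by
            rw [mul_assoc, ← Real.rpow_add ht0]
            ring_nf
    calc ‖(((Ncount q X : ℝ) - κ*(X-1) : ℝ) : ℂ) * (X:ℂ)^(-s)
          + s * ∫ x in (1)..X, ((((Ncount q x : ℝ) - κ*(x-1)) : ℝ) : ℂ) * h x‖
        ≤ ‖(((Ncount q X : ℝ) - κ*(X-1) : ℝ) : ℂ) * (X:ℂ)^(-s)‖
          + ‖s‖ * ‖∫ x in (1)..X,
              ((((Ncount q x : ℝ) - κ*(x-1)) : ℝ) : ℂ) * h x‖ := by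
          rw [← norm_mul]
          exact norm_add_le _ _
      _ ≤ A * u + ‖s‖ * (A * ((1 - u)/(s.re - θ))) := by
          gcongr
      _ = A * (‖s‖ * (1 - u) / (s.re - θ) + u) := by ring
  refine ⟨hB1, hB1.trans ?_⟩
  have hu0 : (0:ℝ) < X ^ (θ - s.re) := Real.rpow_pos_of_pos hX0 _
  have hu1 : X ^ (θ - s.re) ≤ 1 := Real.rpow_le_one_of_one_le_of_nonpos hX (by linarith)
  have hM : s.re - θ ≤ ‖s‖ := by
    have := Complex.abs_re_le_norm s
    have : s.re ≤ ‖s‖ := le_trans (le_abs_self _) this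
    linarith
  apply mul_le_mul_of_nonneg_left _ hA.le
  apply le_min
  · rw [div_add' _ _ _ hσθ.ne', div_le_div_iff₀ hσθ hσθ]
    nlinarith [mul_le_mul_of_nonneg_left hM (mul_nonneg hu0.le hσθ.le)]
  · have hlog : (1 - X ^ (θ - s.re))/(s.re - θ) ≤ Real.log X := by
      rw [div_le_iff₀ hσθ]
      have hueq : X ^ (θ - s.re) = Real.exp (Real.log X * (θ - s.re)) := by
        rw [Real.rpow_def_of_pos hX0]
      have hexp := Real.add_one_le_exp (Real.log X * (θ - s.re))
      rw [← hueq] at hexp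
      nlinarith
    have : ‖s‖ * (1 - X ^ (θ - s.re)) / (s.re - θ)
        ≤ ‖s‖ * Real.log X := by
      rw [mul_div_assoc]
      exact mul_le_mul_of_nonneg_left hlog (norm_nonneg s)
    linarith
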